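/- arXiv:1803.10918 — 2 statements merged into one kernel-verified Lean document; each statement's English description precedes it below -/
import Mathlib

section
/- The operator η is S_{n+m}-equivariant: for every σ in the symmetric group S_N (N = n+m) and every v in M̃, one has η(σ·v) = σ·η(v). -/
open Finset

/-- Number of inversions of a list. -/
def invCount {α : Type*} [LinearOrder α] (l : List α) : ℕ :=
  (Finset.univ.filter
    (fun p : Fin l.length × Fin l.length => p.1 < p.2 ∧ l.get p.2 < l.get p.1)).card

/-- The sign `(-1)^(number of inversions)` of the permutation sorting a list
with pairwise distinct entries into increasing order. -/
noncomputable def invSign {α : Type*} [LinearOrder α] (l : List α) : ℂ :=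
  (-1) ^ invCount l

/-- Replace the entry `a` by `b` (in place) in a list. -/
def replaceOne {α : Type*} [DecidableEq α] (l : List α) (a b : α) : List α :=
  l.map fun z => if z = a then b else z

open scoped Classical in
/-- Dirac delta: the basis vector corresponding to an index `r`. -/
noncomputable def delta {β : Type*} (r : β) : β → ℂ := fun r' => if r' = r then 1 else 0

/-- Index for the basis of ordered column tabloids of shape `(2^m, 1^{n-m})` on
`{1, …, n+m}` (identified with `Fin (n+m)`): such a tabloid is recorded by the
set `T` of entries of its first column (the second column is the complement). -/
abbrev Col (n m : ℕ) := {T : Finset (Fin (n + m)) // T.card = n}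

/-- The space `M̃` of column tabloids of shape `(2^m, 1^{n-m})`. -/
abbrev Mt (n m : ℕ) := Col n m → ℂ

lemma card_compl' {n m : ℕ} (T : Col n m) : (T.1ᶜ).card = m := by
  rw [Finset.card_compl, T.2, Fintype.card_fin]
  omega

/-- `yel T j` is the `(j+1)`-st smallest element of the complement of `T`
(i.e. of the second column). -/
noncomputable def yel {n m : ℕ} (T : Col n m) (j : Fin m) : Fin (n + m) :=
  (T.1ᶜ).orderEmbOfFin (card_compl' T) j

lemma yel_not_mem {n m : ℕ} (T : Col n m) (j : Fin m) : yel T j ∉ T.1 :=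
  Finset.mem_compl.mp (Finset.orderEmbOfFin_mem (T.1ᶜ) (card_compl' T) j)

/-- The first column obtained from `T` after exchanging `x ∈ T` with the
`(j+1)`-st smallest element of the complement. -/
noncomputable def swapSet {n m : ℕ} (T : Col n m) (x : Fin (n + m)) (j : Fin m) :
    Finset (Fin (n + m)) :=
  insert (yel T j) (T.1.erase x)

lemma swapSet_card {n m : ℕ} (T : Col n m) {x : Fin (n + m)} (hx : x ∈ T.1) (j : Fin m) :
    (swapSet T x j).card = n := by
  have h0 : 0 < n := T.2 ▸ Finset.card_pos.mpr ⟨x, hx⟩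
  rw [swapSet, Finset.card_insert_of_notMem
      (fun h => yel_not_mem T j (Finset.mem_of_mem_erase h)),
    Finset.card_erase_of_mem hx, T.2]
  omega

/-- `swap_{x,j}(T)`: the signed basis vector obtained from `T` by exchanging
`x` (in the first column) with the `(j+1)`-st entry of the second column in
place, the sign `ε` being the product of the signs of the two permutations
re-sorting the two columns. -/
noncomputable def swapTerm {n m : ℕ} (T : Col n m) (x : {a // a ∈ T.1}) (j : Fin m) :
    Mt n m :=
  (invSign (replaceOne (T.1.sort (· ≤ ·)) x.1 (yel T j)) *
      invSign (replaceOne ((T.1ᶜ).sort (· ≤ ·)) (yel T j) x.1)) •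
    delta (⟨swapSet T x.1 j, swapSet_card T x.2 j⟩ : Col n m)

/-- The operator `η` on the basis vector `v_T`. -/
noncomputable def etaBasis {n m : ℕ} (T : Col n m) : Mt n m :=
  (m : ℂ) • delta T - ∑ j : Fin m, ∑ x ∈ T.1.attach, swapTerm T x j

/-- The operator `η : M̃ → M̃`, extended linearly from the basis. -/
noncomputable def etaFun {n m : ℕ} (f : Mt n m) : Mt n m :=
  ∑ T : Col n m, f T • etaBasis T

/-- `η` as a linear map. -/
noncomputable def etaLin (n m : ℕ) : Mt n m →ₗ[ℂ] Mt n m where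
  toFun := etaFun
  map_add' f g := by
    simp [etaFun, add_smul, Finset.sum_add_distrib]
  map_smul' c f := by
    simp [etaFun, Finset.smul_sum, smul_smul]

/-- The sign picked up when re-sorting the two columns after relabelling by `σ`. -/
noncomputable def actSign {n m : ℕ} (σ : Equiv.Perm (Fin (n + m))) (T : Col n m) : ℂ :=
  invSign ((T.1.sort (· ≤ ·)).map ⇑σ) * invSign (((T.1ᶜ).sort (· ≤ ·)).map ⇑σ)

lemma image_card {n m : ℕ} (σ : Equiv.Perm (Fin (n + m))) (T : Col n m) :
    (T.1.image ⇑σ).card = n := by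
  rw [Finset.card_image_of_injective _ σ.injective, T.2]

/-- The (signed) action of `S_{n+m}` on the space of column tabloids:
`σ • v_T = sgn(sort₁) sgn(sort₂) v_{σ(T)}`, extended linearly. -/
noncomputable def act {n m : ℕ} (σ : Equiv.Perm (Fin (n + m))) (f : Mt n m) : Mt n m :=
  ∑ T : Col n m, f T •
    (actSign σ T • delta (⟨T.1.image ⇑σ, image_card σ T⟩ : Col n m))

section SpechtSide

variable (γ : Type*) [Fintype γ] [DecidableEq γ] (p q : ℕ)

/-- A bijective Young tableau of the two-column shape with column lengths
`p` (first column) and `q` (second column), with entries in `γ`: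
a bijection from the cells to the entries. -/
abbrev Tabl := (Fin p ⊕ Fin q) ≃ γ

/-- `rows` is a row tabloid of shape `(2^q, 1^{p-q})`: the first `q` rows are
unordered pairs, the remaining rows singletons, all pairwise disjoint
(together they then necessarily partition `γ`). -/
def IsRowTab (rows : Fin p → Finset γ) : Prop :=
  (∀ i, (rows i).card = if (i : ℕ) < q then 2 else 1) ∧
  ∀ i j, i ≠ j → Disjoint (rows i) (rows j)

/-- Row tabloids of shape `(2^q, 1^{p-q})`. -/
abbrev RowTab := {rows : Fin p → Finset γ // IsRowTab γ p q rows}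

/-- The permutation module `M^{(2^q,1^{p-q})}`, with basis the row tabloids. -/
abbrev MP := RowTab γ p q → ℂ

variable {γ p q}

/-- The rows of a tableau. -/
def rowsOf (t : Tabl γ p q) : Fin p → Finset γ := fun i =>
  if h : (i : ℕ) < q then {t (Sum.inl i), t (Sum.inr ⟨(i : ℕ), h⟩)}
  else {t (Sum.inl i)}

lemma mem_rowsOf {t : Tabl γ p q} {i : Fin p} {a : γ} (ha : a ∈ rowsOf t i) :
    a = t (Sum.inl i) ∨ ∃ h : (i : ℕ) < q, a = t (Sum.inr ⟨(i : ℕ), h⟩) := by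
  unfold rowsOf at ha
  split_ifs at ha with h
  · rcases Finset.mem_insert.mp ha with h1 | h1
    · exact Or.inl h1
    · exact Or.inr ⟨h, Finset.mem_singleton.mp h1⟩
  · exact Or.inl (Finset.mem_singleton.mp ha)

lemma isRowTab_rowsOf (t : Tabl γ p q) : IsRowTab γ p q (rowsOf t) := by
  constructor
  · intro i
    by_cases h : (i : ℕ) < q
    · rw [rowsOf, dif_pos h, if_pos h]
      exact Finset.card_pair (t.injective.ne (by simp))
    · rw [rowsOf, dif_neg h, if_neg h]
      exact Finset.card_singleton _
  · intro i j hij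
    rw [Finset.disjoint_left]
    intro a ha hb
    rcases mem_rowsOf ha with h1 | ⟨hi, h1⟩ <;> rcases mem_rowsOf hb with h2 | ⟨hj, h2⟩
    · exact hij (Sum.inl.inj (t.injective (h1.symm.trans h2)))
    · exact Sum.inl_ne_inr (t.injective (h1.symm.trans h2))
    · exact Sum.inr_ne_inl (t.injective (h1.symm.trans h2))
    · refine hij (Fin.ext ?_)
      have h3 := Sum.inr.inj (t.injective (h1.symm.trans h2))
      simpa using congrArg Fin.val h3

/-- The row tabloid `{t}` of a tableau `t`. -/
def rowTabOf (t : Tabl γ p q) : RowTab γ p q := ⟨rowsOf t, isRowTab_rowsOf t⟩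

/-- The column stabilizer `C_t` of a tableau: permutations preserving each
column setwise. -/
def colStab (t : Tabl γ p q) : Finset (Equiv.Perm γ) :=
  Finset.univ.filter fun σ =>
    (∀ i : Fin p, ∃ i' : Fin p, σ (t (Sum.inl i)) = t (Sum.inl i')) ∧
    (∀ j : Fin q, ∃ j' : Fin q, σ (t (Sum.inr j)) = t (Sum.inr j'))

/-- The polytabloid `ε_t = ∑_{β ∈ C_t} sgn(β) {β t}`. -/
noncomputable def polytab (t : Tabl γ p q) : MP γ p q :=
  ∑ σ ∈ colStab t, ((Equiv.Perm.sign σ : ℤ) : ℂ) • delta (rowTabOf (t.trans σ))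

variable (γ p q) in
/-- The Specht module `S^{(2^q,1^{p-q})}`: the span of all polytabloids. -/
noncomputable def SpechtMod : Submodule ℂ (MP γ p q) :=
  Submodule.span ℂ (Set.range (polytab (γ := γ) (p := p) (q := q)))

/-- The entrywise action of a permutation on a row tabloid. -/
def rowAct (σ : Equiv.Perm γ) (r : RowTab γ p q) : RowTab γ p q :=
  ⟨fun i => (r.1 i).image ⇑σ, by
    obtain ⟨h1, h2⟩ := r.2
    refine ⟨fun i => ?_, fun i j hij => ?_⟩
    · rw [Finset.card_image_of_injective _ σ.injective]; exact h1 i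
    · exact (Finset.disjoint_image σ.injective).mpr (h2 i j hij)⟩

/-- The entrywise `S_N`-action on the permutation module. -/
noncomputable def actP (σ : Equiv.Perm γ) (f : MP γ p q) : MP γ p q :=
  fun r => f (rowAct σ⁻¹ r)

end SpechtSide

/-- The tableau `t(T)` whose first column is `T` in increasing order and whose
second column is the complement of `T` in increasing order. -/
noncomputable def tabOf {n m : ℕ} (T : Col n m) : Tabl (Fin (n + m)) n m :=
  Equiv.ofBijective
    (Sum.elim (fun i => T.1.orderEmbOfFin T.2 i)
      (fun j => (T.1ᶜ).orderEmbOfFin (card_compl' T) j))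
    (by
      rw [Fintype.bijective_iff_injective_and_card]
      refine ⟨?_, by simp⟩
      rintro (i | i) (j | j) h <;> simp only [Sum.elim_inl, Sum.elim_inr] at h
      · exact congrArg Sum.inl ((T.1.orderEmbOfFin T.2).injective h)
      · have h1 := Finset.orderEmbOfFin_mem T.1 T.2 i
        have h2 := Finset.orderEmbOfFin_mem (T.1ᶜ) (card_compl' T) j
        rw [h] at h1
        simp only [Finset.mem_compl] at h2
        exact absurd h1 h2
      · have h1 := Finset.orderEmbOfFin_mem T.1 T.2 j
        have h2 := Finset.orderEmbOfFin_mem (T.1ᶜ) (card_compl' T) i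
        rw [← h] at h1
        simp only [Finset.mem_compl] at h2
        exact absurd h1 h2
      · exact congrArg Sum.inr (((T.1ᶜ).orderEmbOfFin (card_compl' T)).injective h))

/-- The `S_N`-equivariant map `α : M̃ → M^{(2^m,1^{n-m})}`, sending `v_T` to the
polytabloid `ε_{t(T)}` (its image is the Specht module). -/
noncomputable def alphaLin (n m : ℕ) : Mt n m →ₗ[ℂ] MP (Fin (n + m)) n m where
  toFun f := ∑ T : Col n m, f T • polytab (tabOf T)
  map_add' f g := by simp [add_smul, Finset.sum_add_distrib]
  map_smul' c f := by simp [Finset.smul_sum, smul_smul]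

/-- `φ(v_T)`, encoding the generalized Jacobi identity (for shape `(2^{n-1},1)`,
i.e. `n = m + 1`):
`φ(v_T) = v_T − ∑_{i=1}^n (−1)^{n−i} sgn(c_i) v_{Tᶜ ∪ {x_i}}` where
`x_i` is the `i`-th smallest element of `T` and `c_i` sorts `(y_1,…,y_{n−1},x_i)`. -/
noncomputable def phiBasis {n m : ℕ} (h : n = m + 1) (T : Col n m) : Mt n m :=
  delta T - ∑ i : Fin n,
    ((-1 : ℂ) ^ (n - 1 - (i : ℕ)) *
        invSign ((T.1ᶜ).sort (· ≤ ·) ++ [T.1.orderEmbOfFin T.2 i])) •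
      delta (⟨insert (T.1.orderEmbOfFin T.2 i) T.1ᶜ, by
        rw [Finset.card_insert_of_notMem (by
            simpa using Finset.orderEmbOfFin_mem T.1 T.2 i),
          card_compl']
        omega⟩ : Col n m)

/-- The map `φ : M̃ → M̃`, extended linearly; `ker φ ≅ ρ_{n,3}`. -/
noncomputable def phiFun {n m : ℕ} (h : n = m + 1) (f : Mt n m) : Mt n m :=
  ∑ T : Col n m, f T • phiBasis h T

/-- `φ` as a linear map. -/
noncomputable def phiLin (n m : ℕ) (h : n = m + 1) : Mt n m →ₗ[ℂ] Mt n m where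
  toFun := phiFun h
  map_add' f g := by simp [phiFun, add_smul, Finset.sum_add_distrib]
  map_smul' c f := by simp [phiFun, Finset.smul_sum, smul_smul]

-- ### sign theory

noncomputable def pProd {α : Type*} [LinearOrder α] {k : ℕ} (f : Fin k → α) : ℂ :=
  ∏ p ∈ Finset.univ.filter (fun p : Fin k × Fin k => p.1 < p.2),
    if f p.2 < f p.1 then (-1 : ℂ) else 1

noncomputable def usign {k : ℕ} (u : Equiv.Perm (Fin k)) : ℂ :=
  ((Equiv.Perm.sign u : ℤ) : ℂ)

lemma pProd_eq_pow {α : Type*} [LinearOrder α] {k : ℕ} (f : Fin k → α) :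
    pProd f = (-1 : ℂ) ^
      (Finset.univ.filter (fun p : Fin k × Fin k => p.1 < p.2 ∧ f p.2 < f p.1)).card := by
  rw [pProd, Finset.prod_ite, Finset.prod_const, Finset.prod_const, one_pow, mul_one,
    Finset.filter_filter]

lemma invSign_eq_pProd {α : Type*} [LinearOrder α] {k : ℕ} (l : List α) (h : l.length = k) :
    invSign l = pProd (fun i : Fin k => l.get (Fin.cast h.symm i)) := by
  subst h
  rw [invSign, invCount, pProd_eq_pow]
  congr 1

lemma signAux_eq_sign {k : ℕ} (u : Equiv.Perm (Fin k)) :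
    Equiv.Perm.signAux u = Equiv.Perm.sign u := by
  refine Equiv.Perm.swap_induction_on u ?_ ?_
  · simp [Equiv.Perm.signAux_one]
  · intro f x y hxy ih
    rw [Equiv.Perm.signAux_mul, Equiv.Perm.signAux_swap hxy, map_mul,
      Equiv.Perm.sign_swap hxy, ih]

lemma pProd_perm {k : ℕ} (u : Equiv.Perm (Fin k)) : pProd (⇑u) = usign u := by
  have h1 : ((Equiv.Perm.signAux u : ℤ) : ℂ) =
      ∏ x ∈ Equiv.Perm.finPairsLT k, if u x.1 ≤ u x.2 then (-1 : ℂ) else 1 := by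
    rw [Equiv.Perm.signAux]
    push_cast
    refine Finset.prod_congr rfl fun x _ => ?_
    split_ifs <;> simp
  rw [usign, ← signAux_eq_sign, h1, pProd]
  refine Finset.prod_nbij' (fun p : Fin k × Fin k => (⟨p.2, p.1⟩ : (_ : Fin k) × Fin k))
    (fun x : (_ : Fin k) × Fin k => (x.2, x.1)) ?_ ?_ ?_ ?_ ?_
  · intro p hp
    simp only [Finset.mem_filter, Finset.mem_univ, true_and] at hp
    exact Equiv.Perm.mem_finPairsLT.mpr hp
  · intro a ha
    simp only [Finset.mem_filter, Finset.mem_univ, true_and]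
    exact Equiv.Perm.mem_finPairsLT.mp ha
  · intro a _; rfl
  · intro p _; rfl
  · intro p hp
    simp only [Finset.mem_filter, Finset.mem_univ, true_and] at hp
    have h3 : u p.2 ≠ u p.1 := fun h => absurd (u.injective h) hp.ne'
    simp only
    rcases lt_or_ge (u p.2) (u p.1) with h4 | h4
    · rw [if_pos h4, if_pos h4.le]
    · rw [if_neg (fun h5 : u p.2 < u p.1 => h3 (le_antisymm h5.le h4)),
        if_neg (fun h5 => h3 (le_antisymm h5 h4))]

lemma pProd_strictMono {α : Type*} [LinearOrder α] {k : ℕ} {f : Fin k → α}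
    (hf : StrictMono f) : pProd f = 1 := by
  rw [pProd]
  refine Finset.prod_eq_one fun p hp => ?_
  simp only [Finset.mem_filter, Finset.mem_univ, true_and] at hp
  rw [if_neg (by exact fun h => absurd (hf hp) h.asymm)]

lemma pProd_strictMono_comp {α β : Type*} [LinearOrder α] [LinearOrder β] {k : ℕ}
    {h : α → β} (hh : StrictMono h) (f : Fin k → α) : pProd (h ∘ f) = pProd f := by
  rw [pProd, pProd]
  refine Finset.prod_congr rfl fun p _ => ?_
  simp only [Function.comp_apply, hh.lt_iff_lt]

lemma pProd_comp_perm {α : Type*} [LinearOrder α] {k : ℕ} {f : Fin k → α}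
    (hf : Function.Injective f) (u : Equiv.Perm (Fin k)) :
    pProd (f ∘ ⇑u) = usign u * pProd f := by
  classical
  have hcard : (Finset.univ.image f).card = k := by
    rw [Finset.card_image_of_injective _ hf, Finset.card_univ, Fintype.card_fin]
  set S : Finset α := Finset.univ.image f with hS
  have hmono : StrictMono ⇑(S.orderEmbOfFin hcard) := (S.orderEmbOfFin hcard).strictMono
  have hmemS : ∀ i, f i ∈ S := fun i => Finset.mem_image_of_mem f (Finset.mem_univ i)
  set w : Fin k → Fin k := fun i => (S.orderIsoOfFin hcard).symm ⟨f i, hmemS i⟩ with hw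
  have hwcomp : ∀ i, (S.orderEmbOfFin hcard) (w i) = f i := by
    intro i
    rw [hw, ← Finset.coe_orderIsoOfFin_apply]
    exact congrArg Subtype.val (Equiv.apply_symm_apply (S.orderIsoOfFin hcard).toEquiv ⟨f i, hmemS i⟩)
  have hwin : Function.Injective w := by
    intro a b hab
    apply hf
    rw [← hwcomp a, ← hwcomp b, hab]
  set W : Equiv.Perm (Fin k) := Equiv.ofBijective w (Finite.injective_iff_bijective.mp hwin)
    with hW
  have hfw : f = ⇑(S.orderEmbOfFin hcard) ∘ w := by
    funext i; exact (hwcomp i).symm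
  have e1 : pProd (f ∘ ⇑u) = usign (u.trans W) := by
    rw [hfw]
    have : (⇑(S.orderEmbOfFin hcard) ∘ w) ∘ ⇑u = ⇑(S.orderEmbOfFin hcard) ∘ ⇑(u.trans W) := by
      funext i; rfl
    rw [this, pProd_strictMono_comp hmono, pProd_perm]
  have e2 : pProd f = usign W := by
    rw [hfw, show ⇑(S.orderEmbOfFin hcard) ∘ w = ⇑(S.orderEmbOfFin hcard) ∘ ⇑W from rfl,
      pProd_strictMono_comp hmono, pProd_perm]
  rw [e1, e2, usign, usign, usign, Equiv.Perm.sign_trans]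
  push_cast
  ring

lemma exists_perm_comp {α : Type*} {k : ℕ} {f g : Fin k → α}
    (hf : Function.Injective f) (hg : Function.Injective g) (hr : ∀ i, f i ∈ Set.range g) :
    ∃ u : Equiv.Perm (Fin k), f = g ∘ ⇑u := by
  classical
  set w : Fin k → Fin k := fun i => (Equiv.ofInjective g hg).symm ⟨f i, hr i⟩ with hw
  have hwcomp : ∀ i, g (w i) = f i := fun i => Equiv.apply_ofInjective_symm hg ⟨f i, hr i⟩
  have hwin : Function.Injective w := by
    intro a b hab
    apply hf
    rw [← hwcomp a, ← hwcomp b, hab]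
  refine ⟨Equiv.ofBijective w (Finite.injective_iff_bijective.mp hwin), ?_⟩
  funext i
  exact (hwcomp i).symm

lemma invSign_map_sort {α β : Type*} [LinearOrder α] [LinearOrder β] (S : Finset α)
    {k : ℕ} (h : S.card = k) (g : α → β) :
    invSign ((S.sort (· ≤ ·)).map g) = pProd (g ∘ ⇑(S.orderEmbOfFin h)) := by
  have hlen : ((S.sort (· ≤ ·)).map g).length = k := by
    rw [List.length_map, Finset.length_sort, h]
  rw [invSign_eq_pProd _ hlen]
  congr 1
  funext i
  simp only [Function.comp_apply, List.get_eq_getElem, List.getElem_map,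
    Finset.orderEmbOfFin_apply]
  rfl

lemma key_sign {α : Type*} [LinearOrder α] [Fintype α] [DecidableEq α] {k : ℕ}
    {S S' Sσ : Finset α} (hS : S.card = k) (hS' : S'.card = k) (hSσ : Sσ.card = k)
    (σ : Equiv.Perm α) (g₁ g₂ : α → α)
    (hrange : ∀ i, g₁ (S.orderEmbOfFin hS i) ∈ S')
    (hinj : Function.Injective (g₁ ∘ ⇑(S.orderEmbOfFin hS)))
    (hcomm : ∀ a, g₂ (σ a) = σ (g₁ a))
    (him : Sσ = S.image ⇑σ) :
    pProd (g₁ ∘ ⇑(S.orderEmbOfFin hS)) * pProd (⇑σ ∘ ⇑(S'.orderEmbOfFin hS'))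
      = pProd (⇑σ ∘ ⇑(S.orderEmbOfFin hS)) * pProd (g₂ ∘ ⇑(Sσ.orderEmbOfFin hSσ)) := by
  set oS := ⇑(S.orderEmbOfFin hS) with hoS
  set oS' := ⇑(S'.orderEmbOfFin hS') with hoS'
  set oSσ := ⇑(Sσ.orderEmbOfFin hSσ) with hoSσ
  have hinjS' : Function.Injective oS' := (S'.orderEmbOfFin hS').injective
  have hinjSσ : Function.Injective oSσ := (Sσ.orderEmbOfFin hSσ).injective
  have hinjσS : Function.Injective (⇑σ ∘ oS) :=
    σ.injective.comp (S.orderEmbOfFin hS).injective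
  -- u : reordering between g₁ ∘ oS and oS'
  obtain ⟨u, hu⟩ : ∃ u : Equiv.Perm (Fin k), g₁ ∘ oS = oS' ∘ ⇑u := by
    refine exists_perm_comp hinj hinjS' fun i => ?_
    rw [hoS', Finset.range_orderEmbOfFin]
    exact hrange i
  -- v : reordering between σ ∘ oS and oSσ
  obtain ⟨v, hv⟩ : ∃ v : Equiv.Perm (Fin k), ⇑σ ∘ oS = oSσ ∘ ⇑v := by
    refine exists_perm_comp hinjσS hinjSσ fun i => ?_
    rw [hoSσ, Finset.range_orderEmbOfFin, him]
    exact Finset.mem_coe.mpr (Finset.mem_image_of_mem _ (Finset.orderEmbOfFin_mem S hS i))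
  have e_left : pProd (g₁ ∘ oS) = usign u := by
    rw [hu, pProd_comp_perm hinjS' u, pProd_strictMono (S'.orderEmbOfFin hS').strictMono,
      mul_one]
  have e_mid : pProd (⇑σ ∘ (g₁ ∘ oS)) = usign u * pProd (⇑σ ∘ oS') := by
    have h2 : ⇑σ ∘ (g₁ ∘ oS) = (⇑σ ∘ oS') ∘ ⇑u := by rw [hu]; rfl
    rw [h2, pProd_comp_perm (σ.injective.comp hinjS') u]
  have e_r1 : pProd (⇑σ ∘ oS) = usign v := by
    rw [hv, pProd_comp_perm hinjSσ v, pProd_strictMono (Sσ.orderEmbOfFin hSσ).strictMono,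
      mul_one]
  have hgσ : g₂ ∘ (⇑σ ∘ oS) = ⇑σ ∘ (g₁ ∘ oS) := by
    funext i
    exact hcomm (oS i)
  have hinj2 : Function.Injective (g₂ ∘ oSσ) := by
    have h5 : (g₂ ∘ oSσ) ∘ ⇑v = ⇑σ ∘ (g₁ ∘ oS) := by
      rw [← hgσ, hv]; rfl
    intro a b hab
    obtain ⟨a', rfl⟩ := v.surjective a
    obtain ⟨b', rfl⟩ := v.surjective b
    have h6 : ((g₂ ∘ oSσ) ∘ ⇑v) a' = ((g₂ ∘ oSσ) ∘ ⇑v) b' := hab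
    rw [h5] at h6
    exact congrArg _ (σ.injective.comp hinj h6)
  have e_r2 : pProd (g₂ ∘ (⇑σ ∘ oS)) = usign v * pProd (g₂ ∘ oSσ) := by
    have h2 : g₂ ∘ (⇑σ ∘ oS) = (g₂ ∘ oSσ) ∘ ⇑v := by rw [hv]; rfl
    rw [h2, pProd_comp_perm hinj2 v]
  calc pProd (g₁ ∘ oS) * pProd (⇑σ ∘ oS') = usign u * pProd (⇑σ ∘ oS') := by rw [e_left]
    _ = pProd (⇑σ ∘ (g₁ ∘ oS)) := e_mid.symm
    _ = pProd (g₂ ∘ (⇑σ ∘ oS)) := by rw [hgσ]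
    _ = usign v * pProd (g₂ ∘ oSσ) := e_r2
    _ = pProd (⇑σ ∘ oS) * pProd (g₂ ∘ oSσ) := by rw [e_r1]

-- ### structural lemmas

lemma compl_image {α : Type*} [Fintype α] [DecidableEq α] (σ : Equiv.Perm α) (s : Finset α) :
    (s.image ⇑σ)ᶜ = sᶜ.image ⇑σ := by
  ext a
  simp only [Finset.mem_compl, Finset.mem_image]
  constructor
  · intro h
    exact ⟨σ.symm a, fun hs => h ⟨σ.symm a, hs, σ.apply_symm_apply a⟩, σ.apply_symm_apply a⟩
  · rintro ⟨b, hb, rfl⟩ ⟨c, hc, hcb⟩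
    exact hb (σ.injective hcb ▸ hc)

/-- The image of a column set under a permutation. -/
noncomputable def mapCol {n m : ℕ} (σ : Equiv.Perm (Fin (n + m))) (T : Col n m) : Col n m :=
  ⟨T.1.image ⇑σ, image_card σ T⟩

lemma sum_delta_smul {n m : ℕ} (R : Col n m) (F : Col n m → Mt n m) :
    ∑ T : Col n m, delta R T • F T = F R := by
  have h1 : ∀ T : Col n m, delta R T • F T = if T = R then F T else 0 := by
    intro T
    rw [delta]
    split_ifs <;> simp
  rw [Finset.sum_congr rfl fun T _ => h1 T, Finset.sum_ite_eq' Finset.univ R F,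
    if_pos (Finset.mem_univ R)]

lemma act_delta {n m : ℕ} (σ : Equiv.Perm (Fin (n + m))) (R : Col n m) :
    act σ (delta R) = actSign σ R • delta (mapCol σ R) := by
  rw [act]
  exact sum_delta_smul R fun T => actSign σ T • delta ⟨T.1.image ⇑σ, image_card σ T⟩

lemma etaFun_delta {n m : ℕ} (R : Col n m) : etaFun (delta R) = etaBasis R := by
  rw [etaFun]
  exact sum_delta_smul R etaBasis

lemma vdecomp {n m : ℕ} (v : Mt n m) : v = ∑ T : Col n m, v T • delta T := by
  funext r
  rw [Finset.sum_apply]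
  have h1 : ∀ T : Col n m, (v T • delta T) r = if r = T then v T else 0 := by
    intro T
    rw [Pi.smul_apply, delta]
    split_ifs <;> simp
  rw [Finset.sum_congr rfl fun T _ => h1 T, Finset.sum_ite_eq Finset.univ r v,
    if_pos (Finset.mem_univ r)]

/-- `act` as a linear map. -/
noncomputable def actL {n m : ℕ} (σ : Equiv.Perm (Fin (n + m))) : Mt n m →ₗ[ℂ] Mt n m where
  toFun := act σ
  map_add' f g := by
    simp [act, add_smul, Finset.sum_add_distrib]
  map_smul' c f := by
    simp only [act, Pi.smul_apply, smul_eq_mul, RingHom.id_apply, Finset.smul_sum, smul_smul,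
      mul_assoc]

lemma x_ne_yel {n m : ℕ} {T : Col n m} {x : Fin (n + m)} (hx : x ∈ T.1) (j : Fin m) :
    x ≠ yel T j := fun h => yel_not_mem T j (h ▸ hx)

lemma swapSet_compl {n m : ℕ} (T : Col n m) {x : Fin (n + m)} (hx : x ∈ T.1) (j : Fin m) :
    (swapSet T x j)ᶜ = insert x ((T.1ᶜ).erase (yel T j)) := by
  rw [swapSet, Finset.compl_insert, Finset.compl_erase,
    Finset.erase_insert_of_ne (x_ne_yel hx j)]

lemma mem_yel_image {n m : ℕ} (σ : Equiv.Perm (Fin (n + m))) (T : Col n m) (j : Fin m) :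
    σ (yel T j) ∈ (mapCol σ T).1ᶜ := by
  rw [mapCol, compl_image]
  exact Finset.mem_image_of_mem _ (Finset.mem_compl.mpr (yel_not_mem T j))

/-- The permutation of `Fin m` matching the relabelled second column. -/
noncomputable def permJ {n m : ℕ} (σ : Equiv.Perm (Fin (n + m))) (T : Col n m)
    (j : Fin m) : Fin m :=
  (((mapCol σ T).1ᶜ).orderIsoOfFin (card_compl' (mapCol σ T))).symm
    ⟨σ (yel T j), mem_yel_image σ T j⟩

lemma yel_permJ {n m : ℕ} (σ : Equiv.Perm (Fin (n + m))) (T : Col n m) (j : Fin m) :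
    yel (mapCol σ T) (permJ σ T j) = σ (yel T j) := by
  rw [yel, permJ, ← Finset.coe_orderIsoOfFin_apply]
  exact congrArg Subtype.val
    (Equiv.apply_symm_apply (((mapCol σ T).1ᶜ).orderIsoOfFin (card_compl' (mapCol σ T))).toEquiv
      ⟨σ (yel T j), mem_yel_image σ T j⟩)

lemma permJ_bijective {n m : ℕ} (σ : Equiv.Perm (Fin (n + m))) (T : Col n m) :
    Function.Bijective (permJ σ T) := by
  rw [← Finite.injective_iff_bijective]
  intro a b hab
  have h1 : yel (mapCol σ T) (permJ σ T a) = yel (mapCol σ T) (permJ σ T b) := by rw [hab]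
  rw [yel_permJ, yel_permJ] at h1
  exact ((T.1ᶜ).orderEmbOfFin (card_compl' T)).injective (σ.injective h1)

/-- `permJ` as an equivalence. -/
noncomputable def permJE {n m : ℕ} (σ : Equiv.Perm (Fin (n + m))) (T : Col n m) :
    Equiv.Perm (Fin m) :=
  Equiv.ofBijective (permJ σ T) (permJ_bijective σ T)


-- ### the scalar identity

lemma invSign_replaceOne_sort {N : ℕ} (S : Finset (Fin N)) {k : ℕ}
    (h : S.card = k) (a b : Fin N) :
    invSign (replaceOne (S.sort (· ≤ ·)) a b) =
      pProd ((fun z => if z = a then b else z) ∘ ⇑(S.orderEmbOfFin h)) :=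
  invSign_map_sort S h _

lemma actSign_eq {n m : ℕ} (σ : Equiv.Perm (Fin (n + m))) (T : Col n m) :
    actSign σ T = pProd (⇑σ ∘ ⇑(T.1.orderEmbOfFin T.2)) *
      pProd (⇑σ ∘ ⇑((T.1ᶜ).orderEmbOfFin (card_compl' T))) := by
  rw [actSign, invSign_map_sort T.1 T.2, invSign_map_sort _ (card_compl' T)]

lemma replace_inj_comp {N : ℕ} {S : Finset (Fin N)} {x y : Fin N}
    (hy : y ∉ S) {k : ℕ} (hS : S.card = k) :
    Function.Injective ((fun z => if z = x then y else z) ∘ ⇑(S.orderEmbOfFin hS)) := by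
  intro i i' h
  apply (S.orderEmbOfFin hS).injective
  have ha := Finset.orderEmbOfFin_mem S hS i
  have hb := Finset.orderEmbOfFin_mem S hS i'
  simp only [Function.comp_apply] at h
  split_ifs at h with h1 h2 h2
  · rw [h1, h2]
  · exfalso
    apply hy
    rw [h]
    exact hb
  · exfalso
    apply hy
    rw [← h]
    exact ha
  · exact h

lemma replace_mem_comp {N : ℕ} {S : Finset (Fin N)} {x y : Fin N}
    {k : ℕ} (hS : S.card = k) (i : Fin k) :
    (fun z => if z = x then y else z) (S.orderEmbOfFin hS i) ∈
      insert y (S.erase x) := by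
  have ha := Finset.orderEmbOfFin_mem S hS i
  show (if S.orderEmbOfFin hS i = x then y else S.orderEmbOfFin hS i) ∈ insert y (S.erase x)
  by_cases h : S.orderEmbOfFin hS i = x
  · rw [if_pos h]
    exact Finset.mem_insert_self _ _
  · rw [if_neg h]
    exact Finset.mem_insert_of_mem (Finset.mem_erase.mpr ⟨h, ha⟩)

lemma replace_comm_perm {N : ℕ} (σ : Equiv.Perm (Fin N)) (x y : Fin N) (a : Fin N) :
    (fun w => if w = σ x then σ y else w) (σ a) =
      σ ((fun z => if z = x then y else z) a) := by
  by_cases h : a = x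
  · simp [h]
  · simp only
    rw [if_neg (fun hh => h (σ.injective hh)), if_neg h]

lemma scalar_id {n m : ℕ} (σ : Equiv.Perm (Fin (n + m))) (T : Col n m)
    {x : Fin (n + m)} (hx : x ∈ T.1) (j : Fin m) :
    (invSign (replaceOne (T.1.sort (· ≤ ·)) x (yel T j)) *
      invSign (replaceOne ((T.1ᶜ).sort (· ≤ ·)) (yel T j) x)) *
      actSign σ (⟨swapSet T x j, swapSet_card T hx j⟩ : Col n m)
    = actSign σ T *
      (invSign (replaceOne ((mapCol σ T).1.sort (· ≤ ·)) (σ x) (σ (yel T j))) *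
       invSign (replaceOne (((mapCol σ T).1ᶜ).sort (· ≤ ·)) (σ (yel T j)) (σ x))) := by
  set y := yel T j with hy
  have hynotin : y ∉ T.1 := yel_not_mem T j
  have hyin : y ∈ T.1ᶜ := Finset.mem_compl.mpr hynotin
  have hxnotin : x ∉ T.1ᶜ := by rwa [Finset.mem_compl, not_not]
  set Tc : Col n m := ⟨swapSet T x j, swapSet_card T hx j⟩ with hTc
  -- first-column identity
  have key1 := key_sign (α := Fin (n + m)) T.2 (swapSet_card T hx j) (mapCol σ T).2 σ
    (fun z => if z = x then y else z) (fun w => if w = σ x then σ y else w)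
    (fun i => by
      rw [swapSet]
      exact replace_mem_comp T.2 i)
    (replace_inj_comp hynotin T.2)
    (replace_comm_perm σ x y)
    rfl
  -- second-column identity
  have key2 := key_sign (α := Fin (n + m)) (card_compl' T) (card_compl' Tc)
    (card_compl' (mapCol σ T)) σ
    (fun z => if z = y then x else z) (fun w => if w = σ y then σ x else w)
    (fun i => by
      show _ ∈ (swapSet T x j)ᶜ
      rw [swapSet_compl T hx j, ← hy]
      exact replace_mem_comp (card_compl' T) i)
    (replace_inj_comp hxnotin (card_compl' T))
    (replace_comm_perm σ y x)
    (by
      show ((T.1.image ⇑σ)ᶜ : Finset (Fin (n + m))) = (T.1ᶜ).image ⇑σ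
      exact compl_image σ T.1)
  rw [actSign_eq σ T, actSign_eq σ Tc,
    invSign_replaceOne_sort T.1 T.2 x y,
    invSign_replaceOne_sort (T.1ᶜ) (card_compl' T) y x,
    invSign_replaceOne_sort (mapCol σ T).1 (mapCol σ T).2 (σ x) (σ y),
    invSign_replaceOne_sort ((mapCol σ T).1ᶜ) (card_compl' (mapCol σ T)) (σ y) (σ x)]
  linear_combination (pProd ((fun z => if z = y then x else z) ∘
      ⇑((T.1ᶜ).orderEmbOfFin (card_compl' T))) *
      pProd (⇑σ ∘ ⇑((Tc.1ᶜ).orderEmbOfFin (card_compl' Tc)))) * key1 +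
    (pProd (⇑σ ∘ ⇑(T.1.orderEmbOfFin T.2)) *
      pProd ((fun w => if w = σ x then σ y else w) ∘
        ⇑(((mapCol σ T).1.orderEmbOfFin (mapCol σ T).2)))) * key2


-- ### equivariance assembly

lemma act_smul' {n m : ℕ} (σ : Equiv.Perm (Fin (n + m))) (c : ℂ) (f : Mt n m) :
    act σ (c • f) = c • act σ f := (actL σ).map_smul c f

lemma act_sub' {n m : ℕ} (σ : Equiv.Perm (Fin (n + m))) (f g : Mt n m) :
    act σ (f - g) = act σ f - act σ g := (actL σ).map_sub f g

lemma act_sum' {n m : ℕ} (σ : Equiv.Perm (Fin (n + m))) {ι : Type*} (s : Finset ι)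
    (F : ι → Mt n m) : act σ (∑ i ∈ s, F i) = ∑ i ∈ s, act σ (F i) :=
  map_sum (actL σ) F s

lemma etaFun_smul' {n m : ℕ} (c : ℂ) (f : Mt n m) :
    etaFun (c • f) = c • etaFun f := (etaLin n m).map_smul c f

lemma etaFun_sum' {n m : ℕ} {ι : Type*} (s : Finset ι) (F : ι → Mt n m) :
    etaFun (∑ i ∈ s, F i) = ∑ i ∈ s, etaFun (F i) :=
  map_sum (etaLin n m) F s

lemma image_swapSet {n m : ℕ} (σ : Equiv.Perm (Fin (n + m))) (T : Col n m)
    {x : Fin (n + m)} (hx : x ∈ T.1) (j : Fin m) :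
    swapSet (mapCol σ T) (σ x) (permJ σ T j) = (swapSet T x j).image ⇑σ := by
  rw [swapSet, swapSet, yel_permJ, Finset.image_insert, Finset.image_erase σ.injective]
  rfl

lemma act_swapTerm {n m : ℕ} (σ : Equiv.Perm (Fin (n + m))) (T : Col n m)
    (x : {a // a ∈ T.1}) (j : Fin m) :
    act σ (swapTerm T x j) = actSign σ T •
      swapTerm (mapCol σ T) ⟨σ x.1, Finset.mem_image_of_mem _ x.2⟩ (permJ σ T j) := by
  simp only [swapTerm, act_smul', act_delta, smul_smul]
  congr 1
  · rw [yel_permJ]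
    exact scalar_id σ T x.2 j
  · exact congrArg delta (Subtype.ext (image_swapSet σ T x.2 j).symm)

lemma mem_of_mem_mapCol {n m : ℕ} {σ : Equiv.Perm (Fin (n + m))} {T : Col n m}
    {a : Fin (n + m)} (ha : a ∈ (mapCol σ T).1) : σ.symm a ∈ T.1 := by
  obtain ⟨b, hb, rfl⟩ := Finset.mem_image.mp ha
  rwa [Equiv.symm_apply_apply]

lemma act_etaBasis {n m : ℕ} (σ : Equiv.Perm (Fin (n + m))) (T : Col n m) :
    act σ (etaBasis T) = actSign σ T • etaBasis (mapCol σ T) := by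
  rw [etaBasis, etaBasis, act_sub', act_smul', act_delta, smul_sub]
  congr 1
  · rw [smul_comm]
  · rw [act_sum', Finset.smul_sum,
      ← Equiv.sum_comp (permJE σ T)
        (fun j' => actSign σ T • ∑ x' ∈ (mapCol σ T).1.attach, swapTerm (mapCol σ T) x' j')]
    refine Finset.sum_congr rfl fun j _ => ?_
    rw [act_sum', Finset.smul_sum]
    refine Finset.sum_nbij'
      (fun x : {a // a ∈ T.1} => (⟨σ x.1, Finset.mem_image_of_mem _ x.2⟩ :
        {a // a ∈ (mapCol σ T).1}))
      (fun x' : {a // a ∈ (mapCol σ T).1} => (⟨σ.symm x'.1, mem_of_mem_mapCol x'.2⟩ :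
        {a // a ∈ T.1}))
      (fun a _ => Finset.mem_attach _ _) (fun a _ => Finset.mem_attach _ _)
      (fun a _ => Subtype.ext (σ.symm_apply_apply a.1))
      (fun a _ => Subtype.ext (σ.apply_symm_apply a.1))
      (fun x _ => act_swapTerm σ T x j)

theorem eta_equivariant' (n m : ℕ)
    (σ : Equiv.Perm (Fin (n + m))) (v : Mt n m) :
    etaFun (act σ v) = act σ (etaFun v) := by
  have hdec := vdecomp v
  calc etaFun (act σ v) = ∑ T : Col n m, v T • (actSign σ T • etaBasis (mapCol σ T)) := by
        conv_lhs => rw [hdec]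
        rw [act_sum', etaFun_sum']
        refine Finset.sum_congr rfl fun T _ => ?_
        rw [act_smul', act_delta, etaFun_smul', etaFun_smul', etaFun_delta]
    _ = act σ (etaFun v) := by
        conv_rhs => rw [hdec]
        rw [etaFun_sum', act_sum']
        refine (Finset.sum_congr rfl fun T _ => ?_).symm
        rw [etaFun_smul', etaFun_delta, act_smul', act_etaBasis]

/-- The operator `η` is `S_{n+m}`-equivariant: for every
permutation `σ` of `{1,…,n+m}` and every `v ∈ M̃`, `η(σ·v) = σ·η(v)`. -/
theorem eta_equivariant (n m : ℕ) (hm : 1 ≤ m) (hmn : m ≤ n)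
    (σ : Equiv.Perm (Fin (n + m))) (v : Mt n m) :
    etaFun (act σ v) = act σ (etaFun v) :=
  eta_equivariant' n m σ v
end

section
/- With m = n−1 (shape (2^{n−1},1), N = 2n−1), the image of η is contained in the image of φ: im(η) ⊆ im(φ). -/
open Finset

/- ===== auxiliary lemmas for the proof ===== -/

section H
variable {α : Type*} [LinearOrder α]

lemma invCount_eq_sum (l : List α) :
    invCount l = ∑ p : Fin l.length × Fin l.length,
      if p.1 < p.2 ∧ l.get p.2 < l.get p.1 then 1 else 0 := by
  classical
  rw [invCount, Finset.card_filter]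

lemma sum_orderEmbOfFin {M : Type*} [AddCommMonoid M] (s : Finset α) {k : ℕ}
    (h : s.card = k) (F : α → M) :
    ∑ i : Fin k, F (s.orderEmbOfFin h i) = ∑ z ∈ s, F z := by
  rw [← Finset.sum_attach s F]
  rw [show (∑ x ∈ s.attach, F x.1) = ∑ x : {x // x ∈ s}, F x.1 from rfl,
    ← Equiv.sum_comp (s.orderIsoOfFin h).toEquiv (fun x => F x.1)]
  exact Finset.sum_congr rfl fun i _ => by
    rw [Equiv.coe_fn_mk]
    exact congrArg F (Finset.coe_orderIsoOfFin_apply s h i)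

lemma sum_ite_sort_get (s : Finset α) (Q : α → Prop) [DecidablePred Q] :
    ∑ i : Fin (s.sort (· ≤ ·)).length, (if Q ((s.sort (· ≤ ·)).get i) then 1 else 0)
      = (s.filter Q).card := by
  classical
  rw [← Finset.card_filter]
  apply Finset.card_bij (fun i _ => (s.sort (· ≤ ·)).get i)
  · intro i hi
    simp only [Finset.mem_filter, Finset.mem_univ, true_and] at hi ⊢
    exact ⟨(Finset.mem_sort (α := α) (· ≤ ·)).1 (List.get_mem _ i), hi⟩
  · intro i _ j _ hij
    exact List.nodup_iff_injective_get.1 (s.sort_nodup (· ≤ ·)) hij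
  · intro a ha
    simp only [Finset.mem_filter] at ha
    obtain ⟨i, hi⟩ := List.mem_iff_get.1 ((Finset.mem_sort (α := α) (· ≤ ·)).2 ha.1)
    refine ⟨i, Finset.mem_filter.2 ⟨Finset.mem_univ _, ?_⟩, hi⟩
    rw [hi]; exact ha.2

lemma invCount_concat (s : Finset α) (x : α) :
    invCount (s.sort (· ≤ ·) ++ [x]) = (s.filter fun t => x < t).card := by
  classical
  set l := s.sort (· ≤ ·) with hl
  have hlen : (l ++ [x]).length = l.length + 1 := by simp
  have hsorted : l.Pairwise (· ≤ ·) := s.pairwise_sort (· ≤ ·)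
  have step := Fintype.sum_equiv ((finCongr hlen).prodCongr (finCongr hlen))
      (fun p : Fin (l ++ [x]).length × Fin (l ++ [x]).length =>
        if p.1 < p.2 ∧ (l ++ [x]).get p.2 < (l ++ [x]).get p.1 then 1 else 0)
      (fun q : Fin (l.length + 1) × Fin (l.length + 1) =>
        if q.1 < q.2 ∧ (l ++ [x]).get (Fin.cast hlen.symm q.2) <
            (l ++ [x]).get (Fin.cast hlen.symm q.1) then 1 else 0)
      (fun p => rfl)
  rw [invCount_eq_sum, step]
  have hcast : ∀ q : Fin l.length,
      (l ++ [x]).get (Fin.cast hlen.symm q.castSucc) = l.get q := by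
    intro q
    rw [List.get_eq_getElem, List.get_eq_getElem]
    exact List.getElem_append_left q.2
  have hlast : (l ++ [x]).get (Fin.cast hlen.symm (Fin.last l.length)) = x := by
    rw [List.get_eq_getElem]
    simp
  rw [Fintype.sum_prod_type, Fin.sum_univ_castSucc]
  have hlastsum : (∑ b : Fin (l.length + 1),
      if Fin.last l.length < b ∧ (l ++ [x]).get (Fin.cast hlen.symm b) <
          (l ++ [x]).get (Fin.cast hlen.symm (Fin.last l.length)) then 1 else 0) = 0 := by
    refine Finset.sum_eq_zero fun b _ => ?_
    rw [if_neg]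
    rintro ⟨hb, -⟩
    exact absurd (Fin.le_last b) (not_le.2 hb)
  rw [hlastsum, add_zero]
  have hinner : ∀ a : Fin l.length, (∑ b : Fin (l.length + 1),
      if a.castSucc < b ∧ (l ++ [x]).get (Fin.cast hlen.symm b) <
          (l ++ [x]).get (Fin.cast hlen.symm a.castSucc) then 1 else 0)
      = if x < l.get a then 1 else 0 := by
    intro a
    rw [Fin.sum_univ_castSucc]
    have hz : ∀ b : Fin l.length, (if a.castSucc < b.castSucc ∧
        (l ++ [x]).get (Fin.cast hlen.symm b.castSucc) <
        (l ++ [x]).get (Fin.cast hlen.symm a.castSucc) then 1 else 0) = 0 := by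
      intro b
      rw [if_neg]
      rintro ⟨hab, hba⟩
      rw [hcast, hcast] at hba
      exact absurd (hsorted.rel_get_of_lt (Fin.castSucc_lt_castSucc_iff.1 hab)) (not_le.2 hba)
    rw [Finset.sum_congr rfl (fun b _ => hz b), Finset.sum_const_zero, zero_add,
      hcast, hlast, if_congr (and_iff_right (Fin.castSucc_lt_last a)) rfl rfl]
  rw [Finset.sum_congr rfl (fun a _ => hinner a)]
  exact sum_ite_sort_get s _
end H

section H2
variable {α : Type*} [LinearOrder α] [DecidableEq α]

lemma invCount_replaceOne (s : Finset α) {x y : α} (hx : x ∈ s) (hy : y ∉ s) :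
    invCount (replaceOne (s.sort (· ≤ ·)) x y)
      = (s.filter fun t => (x < t ∧ t < y) ∨ (y < t ∧ t < x)).card := by
  classical
  set l := s.sort (· ≤ ·) with hl
  set f : α → α := fun z => if z = x then y else z with hf
  have hrl : replaceOne l x y = l.map f := rfl
  have hlen : (l.map f).length = l.length := l.length_map f
  obtain ⟨p, hp⟩ : ∃ p : Fin l.length, l.get p = x := by
    obtain ⟨p, hp⟩ := List.mem_iff_get.1 ((Finset.mem_sort (α := α) (· ≤ ·)).2 hx)
    exact ⟨p, hp⟩
  have hmono : StrictMono l.get := (s.sortedLT_sort).strictMono_get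
  have hgetx : ∀ q : Fin l.length, l.get q = x ↔ q = p := fun q =>
    ⟨fun hq => hmono.injective (hq.trans hp.symm), fun hq => hq ▸ hp⟩
  have hgm : ∀ q : Fin l.length, (l.map f).get (Fin.cast hlen.symm q) = f (l.get q) := by
    intro q
    rw [List.get_eq_getElem, List.get_eq_getElem, List.getElem_map]
    rfl
  have step := Fintype.sum_equiv ((finCongr hlen).prodCongr (finCongr hlen))
      (fun q : Fin (l.map f).length × Fin (l.map f).length =>
        if q.1 < q.2 ∧ (l.map f).get q.2 < (l.map f).get q.1 then 1 else 0)
      (fun q : Fin l.length × Fin l.length =>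
        if q.1 < q.2 ∧ (l.map f).get (Fin.cast hlen.symm q.2) <
            (l.map f).get (Fin.cast hlen.symm q.1) then 1 else 0)
      (fun q => rfl)
  rw [hrl, invCount_eq_sum, step]
  have hfid : ∀ q : Fin l.length, q ≠ p → f (l.get q) = l.get q := by
    intro q hq
    rw [hf]
    exact if_neg (fun h => hq ((hgetx q).1 h))
  have hfp : f (l.get p) = y := by rw [hp, hf]; simp
  have key : ∀ q1 q2 : Fin l.length,
      (q1 < q2 ∧ f (l.get q2) < f (l.get q1)) ↔
      ((q1 = p ∧ (x < l.get q2 ∧ l.get q2 < y)) ∨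
       (q2 = p ∧ (y < l.get q1 ∧ l.get q1 < x))) := by
    intro q1 q2
    constructor
    · rintro ⟨h12, hlt⟩
      by_cases e1 : q1 = p <;> by_cases e2 : q2 = p
      · exact absurd (e1.trans e2.symm) h12.ne
      · left
        refine ⟨e1, ?_, ?_⟩
        · have h3 := hmono h12
          rwa [(hgetx q1).2 e1] at h3
        · rwa [e1, hfp, hfid q2 e2] at hlt
      · right
        refine ⟨e2, ?_, ?_⟩
        · rwa [e2, hfp, hfid q1 e1] at hlt
        · have h3 := hmono h12
          rwa [(hgetx q2).2 e2] at h3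
      · exfalso
        rw [hfid q1 e1, hfid q2 e2] at hlt
        exact absurd (hmono h12) (lt_asymm hlt)
    · rintro (⟨rfl, h1, h2⟩ | ⟨rfl, h1, h2⟩)
      · have hq12 : q1 < q2 := hmono.lt_iff_lt.1 (hp ▸ h1)
        have hne2 : q2 ≠ q1 := by
          intro h
          rw [(hgetx q2).2 h] at h1
          exact lt_irrefl x h1
        refine ⟨hq12, ?_⟩
        rw [hfp, hfid q2 hne2]
        exact h2
      · have hq12 : q1 < q2 := hmono.lt_iff_lt.1 (hp ▸ h2)
        have hne1 : q1 ≠ q2 := by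
          intro h
          rw [(hgetx q1).2 h] at h2
          exact lt_irrefl x h2
        refine ⟨hq12, ?_⟩
        rw [hfp, hfid q1 hne1]
        exact h1
  have hsum : (∑ q : Fin l.length × Fin l.length,
      if q.1 < q.2 ∧ (l.map f).get (Fin.cast hlen.symm q.2) <
          (l.map f).get (Fin.cast hlen.symm q.1) then 1 else 0)
      = ∑ q : Fin l.length × Fin l.length,
        ((if q.1 = p ∧ (x < l.get q.2 ∧ l.get q.2 < y) then 1 else 0) +
         (if q.2 = p ∧ (y < l.get q.1 ∧ l.get q.1 < x) then 1 else 0)) := by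
    refine Finset.sum_congr rfl fun q _ => ?_
    rw [hgm, hgm, if_congr (key q.1 q.2) rfl rfl]
    by_cases hA : q.1 = p ∧ (x < l.get q.2 ∧ l.get q.2 < y) <;>
      by_cases hB : q.2 = p ∧ (y < l.get q.1 ∧ l.get q.1 < x)
    · exfalso
      obtain ⟨e1, hA2⟩ := hA
      obtain ⟨e2, hB2⟩ := hB
      rw [e2, hp] at hA2
      exact absurd hA2.1 (lt_irrefl x)
    · rw [if_pos (Or.inl hA), if_pos hA, if_neg hB]
    · rw [if_pos (Or.inr hB), if_neg hA, if_pos hB]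
    · rw [if_neg (fun h => h.elim hA hB), if_neg hA, if_neg hB]
  rw [hsum, Finset.sum_add_distrib]
  have hfirst : (∑ q : Fin l.length × Fin l.length,
      if q.1 = p ∧ (x < l.get q.2 ∧ l.get q.2 < y) then 1 else 0)
      = (s.filter fun t => x < t ∧ t < y).card := by
    rw [Fintype.sum_prod_type]
    have hin : ∀ q1 : Fin l.length, (∑ q2 : Fin l.length,
        if q1 = p ∧ (x < l.get q2 ∧ l.get q2 < y) then 1 else 0)
        = if q1 = p then (s.filter fun t => x < t ∧ t < y).card else 0 := by
      intro q1
      by_cases hq : q1 = p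
      · rw [if_pos hq]
        refine Eq.trans (Finset.sum_congr rfl fun q2 _ =>
          if_congr (and_iff_right hq) rfl rfl) ?_
        exact sum_ite_sort_get s (fun t => x < t ∧ t < y)
      · rw [if_neg hq]
        exact Finset.sum_eq_zero fun q2 _ => if_neg (fun h => hq h.1)
    rw [Finset.sum_congr rfl fun q1 _ => hin q1, Finset.sum_ite_eq' Finset.univ p,
      if_pos (Finset.mem_univ p)]
  have hsecond : (∑ q : Fin l.length × Fin l.length,
      if q.2 = p ∧ (y < l.get q.1 ∧ l.get q.1 < x) then 1 else 0)
      = (s.filter fun t => y < t ∧ t < x).card := by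
    rw [Fintype.sum_prod_type]
    have hin : ∀ q1 : Fin l.length, (∑ q2 : Fin l.length,
        if q2 = p ∧ (y < l.get q1 ∧ l.get q1 < x) then 1 else 0)
        = if y < l.get q1 ∧ l.get q1 < x then 1 else 0 := by
      intro q1
      by_cases hq : y < l.get q1 ∧ l.get q1 < x
      · rw [if_pos hq,
          Finset.sum_congr rfl fun q2 _ => if_congr (and_iff_left hq) rfl rfl,
          Finset.sum_ite_eq' Finset.univ p (fun _ => 1), if_pos (Finset.mem_univ p)]
      · rw [if_neg hq]
        exact Finset.sum_eq_zero fun q2 _ => if_neg fun h => hq h.2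
    rw [Finset.sum_congr rfl fun q1 _ => hin q1]
    exact sum_ite_sort_get s (fun t => y < t ∧ t < x)
  rw [hfirst, hsecond, ← Finset.card_union_of_disjoint, ← Finset.filter_or]
  rw [Finset.disjoint_filter]
  rintro z _ ⟨h1, h2⟩ ⟨h3, h4⟩
  exact absurd (h1.trans h2) (lt_asymm (h3.trans h4))
end H2



section Counting
variable {α : Type*} [LinearOrder α]

lemma card_filter_gt {k : ℕ} (s : Finset α) (hs : s.card = k) (i : Fin k) :
    (s.filter fun t => s.orderEmbOfFin hs i < t).card = k - 1 - (i : ℕ) := by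
  classical
  rw [Finset.card_filter,
    ← sum_orderEmbOfFin s hs (fun t => if s.orderEmbOfFin hs i < t then 1 else 0),
    Finset.sum_congr rfl (fun j _ => if_congr (OrderEmbedding.lt_iff_lt _) rfl rfl),
    ← Finset.card_filter,
    show (Finset.univ.filter fun j : Fin k => i < j) = Finset.Ioi i from by ext j; simp]
  exact Fin.card_Ioi i
end Counting

section FinCount
variable {Nn : ℕ}

lemma card_filter_univ_gt (x : Fin Nn) :
    (Finset.univ.filter fun t : Fin Nn => x < t).card = Nn - 1 - (x : ℕ) := by
  rw [show (Finset.univ.filter fun t : Fin Nn => x < t) = Finset.Ioi x from by ext; simp]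
  exact Fin.card_Ioi x

lemma card_filter_add_card_filter_compl (s : Finset (Fin Nn)) (Q : Fin Nn → Prop)
    [DecidablePred Q] :
    (s.filter Q).card + (sᶜ.filter Q).card = (Finset.univ.filter Q).card := by
  rw [← Finset.card_union_of_disjoint (Finset.disjoint_filter_filter disjoint_compl_right),
    ← Finset.filter_union, Finset.union_compl]

lemma card_filter_between {x y : Fin Nn} (hxy : x < y) :
    (Finset.univ.filter fun t : Fin Nn => (x < t ∧ t < y) ∨ (y < t ∧ t < x)).card
      = (y : ℕ) - (x : ℕ) - 1 := by
  rw [show (Finset.univ.filter fun t : Fin Nn => (x < t ∧ t < y) ∨ (y < t ∧ t < x))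
      = Finset.Ioo x y from by
    ext t
    simp only [Finset.mem_filter, Finset.mem_univ, true_and, Finset.mem_Ioo]
    constructor
    · rintro (⟨h1, h2⟩ | ⟨h1, h2⟩)
      · exact ⟨h1, h2⟩
      · exact absurd (h2.trans hxy) (lt_asymm h1)
    · exact fun ht => Or.inl ht]
  exact Fin.card_Ioo x y
end FinCount

lemma coeff_eq {n m : ℕ} (h : n = m + 1) (R : Col n m) (i : Fin n) :
    (-1 : ℂ) ^ (n - 1 - (i : ℕ)) *
        invSign ((R.1ᶜ).sort (· ≤ ·) ++ [R.1.orderEmbOfFin R.2 i])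
      = (-1) ^ ((R.1.orderEmbOfFin R.2 i : Fin (n + m)) : ℕ) := by
  classical
  rw [invSign, invCount_concat, ← pow_add]
  have ha : (R.1.filter fun t => R.1.orderEmbOfFin R.2 i < t).card = n - 1 - (i : ℕ) :=
    card_filter_gt R.1 R.2 i
  have hab : (R.1.filter fun t => R.1.orderEmbOfFin R.2 i < t).card
      + ((R.1ᶜ).filter fun t => R.1.orderEmbOfFin R.2 i < t).card
      = (n + m) - 1 - ((R.1.orderEmbOfFin R.2 i : Fin (n + m)) : ℕ) := by
    rw [card_filter_add_card_filter_compl, card_filter_univ_gt]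
  have hxle : ((R.1.orderEmbOfFin R.2 i : Fin (n + m)) : ℕ) < n + m :=
    (R.1.orderEmbOfFin R.2 i).isLt
  have hi : (i : ℕ) < n := i.isLt
  have hpar : ((n - 1 - (i : ℕ)) + ((R.1ᶜ).filter
      fun t => R.1.orderEmbOfFin R.2 i < t).card) % 2
      = ((R.1.orderEmbOfFin R.2 i : Fin (n + m)) : ℕ) % 2 := by omega
  rw [neg_one_pow_eq_pow_mod_two, hpar, ← neg_one_pow_eq_pow_mod_two]

lemma swapCoeff_eq {n m : ℕ} (h : n = m + 1) (T : Col n m) {x : Fin (n + m)}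
    (hx : x ∈ T.1) (j : Fin m) :
    invSign (replaceOne (T.1.sort (· ≤ ·)) x (yel T j)) *
        invSign (replaceOne ((T.1ᶜ).sort (· ≤ ·)) (yel T j) x)
      = -(-1 : ℂ) ^ ((x : ℕ) + ((yel T j : Fin (n + m)) : ℕ)) := by
  classical
  have hyT : yel T j ∉ T.1 := yel_not_mem T j
  have hyc : yel T j ∈ T.1ᶜ := Finset.mem_compl.2 hyT
  have hxc : x ∉ T.1ᶜ := by simp [hx]
  have hne : x ≠ yel T j := fun hxy => hyT (hxy ▸ hx)
  rw [invSign, invSign, invCount_replaceOne T.1 hx hyT,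
    invCount_replaceOne (T.1ᶜ) hyc hxc,
    show ((T.1ᶜ).filter fun t => (yel T j < t ∧ t < x) ∨ (x < t ∧ t < yel T j))
      = ((T.1ᶜ).filter fun t => (x < t ∧ t < yel T j) ∨ (yel T j < t ∧ t < x)) from
      Finset.filter_congr fun t _ => or_comm,
    ← pow_add]
  have hAB : (T.1.filter fun t => (x < t ∧ t < yel T j) ∨ (yel T j < t ∧ t < x)).card
      + ((T.1ᶜ).filter fun t => (x < t ∧ t < yel T j) ∨ (yel T j < t ∧ t < x)).card
      = (Finset.univ.filter
        fun t => (x < t ∧ t < yel T j) ∨ (yel T j < t ∧ t < x)).card :=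
    card_filter_add_card_filter_compl _ _
  have huniv : (Finset.univ.filter
      fun t => (x < t ∧ t < yel T j) ∨ (yel T j < t ∧ t < x)).card
      = max ((x : ℕ)) ((yel T j : ℕ)) - min ((x : ℕ)) ((yel T j : ℕ)) - 1 := by
    rcases hne.lt_or_gt with hlt | hlt
    · rw [card_filter_between hlt]
      have h1 : (x : ℕ) < (yel T j : ℕ) := hlt
      omega
    · rw [show (Finset.univ.filter
          fun t => (x < t ∧ t < yel T j) ∨ (yel T j < t ∧ t < x))
          = (Finset.univ.filter
          fun t => (yel T j < t ∧ t < x) ∨ (x < t ∧ t < yel T j)) from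
          Finset.filter_congr fun t _ => or_comm,
        card_filter_between hlt]
      have h1 : ((yel T j : Fin (n + m)) : ℕ) < (x : ℕ) := hlt
      omega
  have hvne : ((x : ℕ)) ≠ ((yel T j : ℕ)) := fun hc => hne (Fin.ext hc)
  have hmod : ((T.1.filter fun t => (x < t ∧ t < yel T j) ∨ (yel T j < t ∧ t < x)).card
      + ((T.1ᶜ).filter fun t => (x < t ∧ t < yel T j) ∨ (yel T j < t ∧ t < x)).card) % 2
      = ((x : ℕ) + ((yel T j : Fin (n + m)) : ℕ) + 1) % 2 := by omega
  rw [neg_one_pow_eq_pow_mod_two, hmod, ← neg_one_pow_eq_pow_mod_two, pow_succ]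
  ring


/-- Indicator vector of the column-tabloid basis element with first column `A`. -/
noncomputable def deltaS {n m : ℕ} (A : Finset (Fin (n + m))) : Mt n m :=
  fun R => if R.1 = A then 1 else 0

lemma delta_eq_deltaS {n m : ℕ} (R : Col n m) : delta R = deltaS R.1 := by
  classical
  funext R'
  simp only [delta, deltaS]
  by_cases hR : R' = R
  · rw [if_pos hR, if_pos (congrArg _ hR)]
  · rw [if_neg hR, if_neg (fun hc => hR (Subtype.ext hc))]

lemma phiLin_delta {n m : ℕ} (h : n = m + 1) (R : Col n m) :
    phiLin n m h (delta R) = phiBasis h R := by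
  classical
  show phiFun h (delta R) = phiBasis h R
  rw [phiFun, Finset.sum_eq_single R
    (fun S _ hS => by simp [delta, hS])
    (fun hR => absurd (Finset.mem_univ R) hR)]
  simp [delta]


lemma colS_card {n m : ℕ} (h : n = m + 1) (T : Col n m) (i : Fin n) :
    (insert (T.1.orderEmbOfFin T.2 i) T.1ᶜ).card = n := by
  rw [Finset.card_insert_of_notMem (by simpa using Finset.orderEmbOfFin_mem T.1 T.2 i),
    card_compl']
  omega

/-- The column tabloid `T^c ∪ {x_i}`. -/
noncomputable def colS {n m : ℕ} (h : n = m + 1) (T : Col n m) (i : Fin n) : Col n m :=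
  ⟨insert (T.1.orderEmbOfFin T.2 i) T.1ᶜ, colS_card h T i⟩

lemma colS_compl {n m : ℕ} (h : n = m + 1) (T : Col n m) (i : Fin n) :
    ((colS h T i).1)ᶜ = T.1.erase (T.1.orderEmbOfFin T.2 i) := by
  show (insert _ T.1ᶜ)ᶜ = _
  rw [Finset.compl_insert, compl_compl]

lemma expandT {n m : ℕ} (h : n = m + 1) (T : Col n m) :
    phiBasis h T = deltaS T.1 - ∑ i : Fin n,
      ((-1 : ℂ) ^ ((T.1.orderEmbOfFin T.2 i : Fin (n + m)) : ℕ)) •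
        deltaS ((colS h T i).1) := by
  rw [phiBasis, delta_eq_deltaS]
  congr 1
  refine Finset.sum_congr rfl fun i _ => ?_
  rw [coeff_eq h T i, delta_eq_deltaS]
  exact rfl

lemma expandS {n m : ℕ} (h : n = m + 1) (T : Col n m) (i : Fin n) :
    phiBasis h (colS h T i) = deltaS ((colS h T i).1)
      - (((-1 : ℂ) ^ ((T.1.orderEmbOfFin T.2 i : Fin (n + m)) : ℕ)) • deltaS T.1
        + ∑ y ∈ T.1ᶜ, ((-1 : ℂ) ^ ((y : ℕ))) •
            deltaS (insert y (T.1.erase (T.1.orderEmbOfFin T.2 i)))) := by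
  classical
  have hXmem : T.1.orderEmbOfFin T.2 i ∈ T.1 := Finset.orderEmbOfFin_mem T.1 T.2 i
  have hXc : T.1.orderEmbOfFin T.2 i ∉ T.1ᶜ := by simp [hXmem]
  rw [phiBasis, delta_eq_deltaS]
  congr 1
  calc (∑ k : Fin n, ((-1 : ℂ) ^ (n - 1 - (k : ℕ)) *
        invSign (((colS h T i).1ᶜ).sort (· ≤ ·) ++
          [(colS h T i).1.orderEmbOfFin (colS h T i).2 k])) •
        delta (⟨insert ((colS h T i).1.orderEmbOfFin (colS h T i).2 k)
          ((colS h T i).1)ᶜ, by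
            rw [Finset.card_insert_of_notMem (by
                simpa using Finset.orderEmbOfFin_mem (colS h T i).1 (colS h T i).2 k),
              card_compl']
            omega⟩ : Col n m))
      = ∑ k : Fin n,
          (fun z : Fin (n + m) => ((-1 : ℂ) ^ ((z : ℕ))) •
            deltaS (insert z (((colS h T i).1)ᶜ)))
          ((colS h T i).1.orderEmbOfFin (colS h T i).2 k) := by
        refine Finset.sum_congr rfl fun k _ => ?_
        rw [coeff_eq h (colS h T i) k, delta_eq_deltaS]
    _ = ∑ z ∈ (colS h T i).1, ((-1 : ℂ) ^ ((z : ℕ))) •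
          deltaS (insert z (((colS h T i).1)ᶜ)) :=
        sum_orderEmbOfFin (colS h T i).1 (colS h T i).2
          (fun z => ((-1 : ℂ) ^ ((z : ℕ))) • deltaS (insert z (((colS h T i).1)ᶜ)))
    _ = ∑ z ∈ insert (T.1.orderEmbOfFin T.2 i) T.1ᶜ, ((-1 : ℂ) ^ ((z : ℕ))) •
          deltaS (insert z (T.1.erase (T.1.orderEmbOfFin T.2 i))) := by
        rw [colS_compl h T i]
        exact rfl
    _ = ((-1 : ℂ) ^ ((T.1.orderEmbOfFin T.2 i : Fin (n + m)) : ℕ)) •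
          deltaS (insert (T.1.orderEmbOfFin T.2 i)
            (T.1.erase (T.1.orderEmbOfFin T.2 i)))
        + ∑ y ∈ T.1ᶜ, ((-1 : ℂ) ^ ((y : ℕ))) •
            deltaS (insert y (T.1.erase (T.1.orderEmbOfFin T.2 i))) :=
        Finset.sum_insert hXc
    _ = ((-1 : ℂ) ^ ((T.1.orderEmbOfFin T.2 i : Fin (n + m)) : ℕ)) • deltaS T.1
        + ∑ y ∈ T.1ᶜ, ((-1 : ℂ) ^ ((y : ℕ))) •
            deltaS (insert y (T.1.erase (T.1.orderEmbOfFin T.2 i))) := by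
        rw [Finset.insert_erase hXmem]

lemma etaBasis_mem_range {n m : ℕ} (h : n = m + 1) (T : Col n m) :
    etaBasis T ∈ LinearMap.range (phiLin n m h) := by
  classical
  refine ⟨phiBasis h T - (2 : ℂ) • delta T, ?_⟩
  have e1 : etaBasis T = (m : ℂ) • deltaS T.1
      + ∑ x ∈ T.1, ∑ y ∈ T.1ᶜ, ((-1 : ℂ) ^ ((x : ℕ) + (y : ℕ))) •
          deltaS (insert y (T.1.erase x)) := by
    rw [etaBasis, delta_eq_deltaS, sub_eq_add_neg]
    congr 1
    have hsw : ∀ (j : Fin m) (x : {a // a ∈ T.1}), swapTerm T x j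
        = -(((-1 : ℂ) ^ ((x.1 : ℕ) + ((yel T j : Fin (n + m)) : ℕ))) •
            deltaS (insert (yel T j) (T.1.erase x.1))) := by
      intro j x
      rw [swapTerm, swapCoeff_eq h T x.2 j, delta_eq_deltaS, neg_smul]
      exact rfl
    rw [Finset.sum_congr rfl fun j _ => Finset.sum_congr rfl fun x _ => hsw j x]
    simp only [Finset.sum_neg_distrib]
    rw [neg_neg, Finset.sum_comm]
    rw [Finset.sum_attach T.1 (fun x => ∑ j : Fin m,
      ((-1 : ℂ) ^ ((x : ℕ) + ((yel T j : Fin (n + m)) : ℕ))) •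
        deltaS (insert (yel T j) (T.1.erase x)))]
    refine Finset.sum_congr rfl fun x _ => ?_
    exact sum_orderEmbOfFin (T.1ᶜ) (card_compl' T) (fun y =>
      ((-1 : ℂ) ^ ((x : ℕ) + (y : ℕ))) • deltaS (insert y (T.1.erase x)))
  have hterm : ∀ i : Fin n,
      ((-1 : ℂ) ^ ((T.1.orderEmbOfFin T.2 i : Fin (n + m)) : ℕ)) •
        phiBasis h (colS h T i)
      = ((-1 : ℂ) ^ ((T.1.orderEmbOfFin T.2 i : Fin (n + m)) : ℕ)) •
          deltaS ((colS h T i).1)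
        - (deltaS T.1 + ∑ y ∈ T.1ᶜ,
            ((-1 : ℂ) ^ (((T.1.orderEmbOfFin T.2 i : Fin (n + m)) : ℕ) + (y : ℕ))) •
              deltaS (insert y (T.1.erase (T.1.orderEmbOfFin T.2 i)))) := by
    intro i
    rw [expandS h T i, smul_sub, smul_add, smul_smul, ← pow_add,
      Even.neg_one_pow (Even.add_self _), one_smul, Finset.smul_sum]
    congr 2
    refine Finset.sum_congr rfl fun y _ => ?_
    rw [smul_smul, ← pow_add]
  show phiLin n m h (phiBasis h T - (2 : ℂ) • delta T) = etaBasis T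
  rw [map_sub, map_smul, phiLin_delta h T]
  have hone : phiLin n m h (phiBasis h T) = phiBasis h T - ∑ i : Fin n,
      ((-1 : ℂ) ^ ((T.1.orderEmbOfFin T.2 i : Fin (n + m)) : ℕ)) •
        phiBasis h (colS h T i) := by
    conv_lhs => rw [expandT h T]
    rw [map_sub, map_sum, ← delta_eq_deltaS T, phiLin_delta h T]
    congr 1
    refine Finset.sum_congr rfl fun i _ => ?_
    rw [map_smul, ← delta_eq_deltaS (colS h T i), phiLin_delta h (colS h T i)]
  rw [hone, e1, expandT h T]
  rw [Finset.sum_congr rfl fun i _ => hterm i]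
  rw [Finset.sum_sub_distrib, Finset.sum_add_distrib, Finset.sum_const,
    Finset.card_univ, Fintype.card_fin]
  rw [show (∑ i : Fin n, ∑ y ∈ T.1ᶜ,
      ((-1 : ℂ) ^ (((T.1.orderEmbOfFin T.2 i : Fin (n + m)) : ℕ) + (y : ℕ))) •
        deltaS (insert y (T.1.erase (T.1.orderEmbOfFin T.2 i))))
      = ∑ x ∈ T.1, ∑ y ∈ T.1ᶜ, ((-1 : ℂ) ^ ((x : ℕ) + (y : ℕ))) •
          deltaS (insert y (T.1.erase x))
    from sum_orderEmbOfFin T.1 T.2 (fun x => ∑ y ∈ T.1ᶜ,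
      ((-1 : ℂ) ^ ((x : ℕ) + (y : ℕ))) • deltaS (insert y (T.1.erase x)))]
  have hnsmul : n • deltaS (n := n) (m := m) T.1 = (n : ℂ) • deltaS T.1 :=
    (Nat.cast_smul_eq_nsmul ℂ n _).symm
  rw [hnsmul, two_smul]
  have hcast : (n : ℂ) = (m : ℂ) + 1 := by rw [h]; push_cast; ring
  rw [hcast, add_smul, one_smul]
  abel

/-- For the shape `(2^{n-1}, 1)` (i.e. `m = n - 1`,
`N = 2n - 1`), the image of `η` is contained in the image of `φ`. -/
theorem range_eta_le_range_phi (n : ℕ) (hn : 2 ≤ n) :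
    LinearMap.range (etaLin n (n - 1)) ≤
      LinearMap.range (phiLin n (n - 1) (by omega)) := by
  rintro v ⟨f, rfl⟩
  show etaFun f ∈ _
  rw [etaFun]
  exact Submodule.sum_mem _ fun T _ =>
    Submodule.smul_mem _ _ (etaBasis_mem_range (by omega) T)
end
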